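/- Let a₁ > a₂ > 0 and let Γ = {(x₁,x₂) ∈ ℝ² : x₁²/a₁² + x₂²/a₂² = 1}. Let A₀, A₁, A₂ ∈ Γ be pairwise distinct points satisfying the billiard reflection law at A₁: writing u = (A₁ − A₀)/‖A₁ − A₀‖ and n for the unit vector proportional to ((A₁)₁/a₁², (A₁)₂/a₂²) (the outward normal to Γ at A₁), one has (A₂ − A₁)/‖A₂ − A₁‖ = u − 2⟪u, n⟫ n. Suppose (p, q, r) ∈ ℝ³ with (p,q) ≠ (0,0) satisfies p x₁ + q x₂ = r at both A₀ and A₁, and suppose λ ∈ ℝ with λ ∉ {−a₁², −a₂²} satisfies (a₁² + λ) p² + (a₂² + λ) q² = r² (i.e., the line A₀A₁ is tangent to the confocal conic Γ_λ). Then any (p', q', r') ∈ ℝ³ with (p',q') ≠ (0,0) satisfying p' x₁ + q' x₂ = r' at both A₁ and A₂ also satisfies (a₁² + λ) p'² + (a₂² + λ) q'² = r'²; that is, the reflected segment A₁A₂ is tangent to the same confocal conic Γ_λ. -/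

import Mathlib

private lemma line_param (b₀ b₁ c₀ c₁ p q r : ℝ) (hne : ¬(c₀ = b₀ ∧ c₁ = b₁))
    (hpq : ¬(p = 0 ∧ q = 0)) (hB : p * b₀ + q * b₁ = r) (hC : p * c₀ + q * c₁ = r) :
    ∃ s : ℝ, s ≠ 0 ∧ p = s * (c₁ - b₁) ∧ q = -(s * (c₀ - b₀)) ∧
      r = s * ((c₁ - b₁) * b₀ - (c₀ - b₀) * b₁) := by
  have horth : p * (c₀ - b₀) + q * (c₁ - b₁) = 0 := by linear_combination hC - hB
  by_cases hw0 : c₀ - b₀ = 0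
  · have hw1 : c₁ - b₁ ≠ 0 := fun hw1 => hne ⟨by linarith, by linarith⟩
    have hq : q = 0 := by
      have h : q * (c₁ - b₁) = 0 := by linear_combination horth - p * hw0
      exact (mul_eq_zero.mp h).resolve_right hw1
    have hp : p ≠ 0 := fun hp => hpq ⟨hp, hq⟩
    refine ⟨p / (c₁ - b₁), div_ne_zero hp hw1, by field_simp, by rw [hq, hw0]; ring, ?_⟩
    have hr : r = p * b₀ := by linear_combination -hB + b₁ * hq
    rw [hr, hw0]
    field_simp
    ring
  · refine ⟨-q / (c₀ - b₀), ?_, ?_, ?_, ?_⟩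
    · intro hs
      have hq : q = 0 := by
        have := (div_eq_zero_iff.mp hs).resolve_right hw0
        linarith
      have hp : p = 0 := by
        have h : p * (c₀ - b₀) = 0 := by linear_combination horth - (c₁ - b₁) * hq
        exact (mul_eq_zero.mp h).resolve_right hw0
      exact hpq ⟨hp, hq⟩
    · field_simp
      linear_combination horth
    · field_simp
    · have hp : p = (-q / (c₀ - b₀)) * (c₁ - b₁) := by
        field_simp; linear_combination horth
      have hq : q = -((-q / (c₀ - b₀)) * (c₀ - b₀)) := by field_simp
      linear_combination (-1 : ℝ) * hB + b₀ * hp + b₁ * hq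

private lemma key_refl (a₁ a₂ lam x y n₀ n₁ k u₀ u₁ : ℝ)
    (ha₁ : a₁ ≠ 0) (ha₂ : a₂ ≠ 0)
    (hell : x ^ 2 / a₁ ^ 2 + y ^ 2 / a₂ ^ 2 = 1)
    (hn : n₀ ^ 2 + n₁ ^ 2 = 1)
    (hk0 : n₀ = k * (x / a₁ ^ 2)) (hk1 : n₁ = k * (y / a₂ ^ 2))
    (hT : (a₂ ^ 2 + lam) * u₀ ^ 2 + (a₁ ^ 2 + lam) * u₁ ^ 2 = (u₁ * x - u₀ * y) ^ 2) :
    (a₂ ^ 2 + lam) * (u₀ - 2 * (u₀ * n₀ + u₁ * n₁) * n₀) ^ 2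
      + (a₁ ^ 2 + lam) * (u₁ - 2 * (u₀ * n₀ + u₁ * n₁) * n₁) ^ 2
      = ((u₁ - 2 * (u₀ * n₀ + u₁ * n₁) * n₁) * x
          - (u₀ - 2 * (u₀ * n₀ + u₁ * n₁) * n₀) * y) ^ 2 := by
  have h1 : (a₁ ^ 2 : ℝ) ≠ 0 := pow_ne_zero 2 ha₁
  have h2 : (a₂ ^ 2 : ℝ) ≠ 0 := pow_ne_zero 2 ha₂
  have hn₀ : a₁ ^ 2 * n₀ = k * x := by rw [hk0]; field_simp
  have hn₁ : a₂ ^ 2 * n₁ = k * y := by rw [hk1]; field_simp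
  have hell' : a₂ ^ 2 * x ^ 2 + a₁ ^ 2 * y ^ 2 = a₁ ^ 2 * a₂ ^ 2 := by
    field_simp at hell
    linear_combination hell
  have hB : n₀ * n₁ * (a₂ ^ 2 - a₁ ^ 2) + (x * n₁ - y * n₀) * (y * n₁ + x * n₀) = 0 := by
    have h4 : (a₁ ^ 4 * a₂ ^ 4 : ℝ) ≠ 0 := by positivity
    have sB : a₁ ^ 4 * a₂ ^ 4 *
        (n₀ * n₁ * (a₂ ^ 2 - a₁ ^ 2) + (x * n₁ - y * n₀) * (y * n₁ + x * n₀)) = 0 := by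
      linear_combination
        (((a₂^2 - a₁^2) + x^2 - y^2) * a₁^2 * a₂^2 * (a₂^2*n₁)
            - x*y * a₂^4 * (a₁^2*n₀ + k*x)) * hn₀
        + (((a₂^2 - a₁^2) + x^2 - y^2) * a₁^2 * a₂^2 * (k*x)
            + x*y * a₁^4 * (a₂^2*n₁ + k*y)) * hn₁
        + k^2*x*y*(a₁^2 - a₂^2) * hell'
    exact (mul_eq_zero.mp sB).resolve_left h4
  set c : ℝ := (a₂ ^ 2 + lam) * n₀ ^ 2 + (a₁ ^ 2 + lam) * n₁ ^ 2 - (x * n₁ - y * n₀) ^ 2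
    with hc
  have eq0 : (a₂ ^ 2 + lam) * n₀ + y * (x * n₁ - y * n₀) = c * n₀ := by
    rw [hc]
    linear_combination (-((a₂ ^ 2 + lam) * n₀ + (x * n₁ - y * n₀) * y)) * hn + n₁ * hB
  have eq1 : (a₁ ^ 2 + lam) * n₁ - x * (x * n₁ - y * n₀) = c * n₁ := by
    rw [hc]
    linear_combination (-((a₁ ^ 2 + lam) * n₁) + (x * n₁ - y * n₀) * x) * hn - n₀ * hB
  set d : ℝ := u₀ * n₀ + u₁ * n₁ with hd
  linear_combination hT + (-4*d*u₀ + 4*d^2*n₀) * eq0 + (-4*d*u₁ + 4*d^2*n₁) * eq1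
    + 4*c*d^2 * hn


open RealInnerProductSpace

/-- Theorem 4 (integrability of the billiard in an ellipse): if the chord `A₀A₁`
of a billiard trajectory in the ellipse `Γ` is tangent to the confocal conic
`Γ_λ`, then so is the reflected chord `A₁A₂`. -/
theorem billiard_in_ellipse_integrable
    (a₁ a₂ : ℝ) (ha : a₂ < a₁) (ha₂ : 0 < a₂)
    (A₀ A₁ A₂ : EuclideanSpace ℝ (Fin 2))
    (hA₀ : (A₀ 0) ^ 2 / a₁ ^ 2 + (A₀ 1) ^ 2 / a₂ ^ 2 = 1)
    (hA₁ : (A₁ 0) ^ 2 / a₁ ^ 2 + (A₁ 1) ^ 2 / a₂ ^ 2 = 1)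
    (hA₂ : (A₂ 0) ^ 2 / a₁ ^ 2 + (A₂ 1) ^ 2 / a₂ ^ 2 = 1)
    (h01 : A₀ ≠ A₁) (h12 : A₁ ≠ A₂) (h02 : A₀ ≠ A₂)
    (n : EuclideanSpace ℝ (Fin 2)) (hn : ‖n‖ = 1)
    (hnprop : ∃ k : ℝ, 0 < k ∧ n 0 = k * (A₁ 0 / a₁ ^ 2) ∧ n 1 = k * (A₁ 1 / a₂ ^ 2))
    (hrefl : ‖A₂ - A₁‖⁻¹ • (A₂ - A₁) =
      ‖A₁ - A₀‖⁻¹ • (A₁ - A₀)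
        - (2 * ⟪‖A₁ - A₀‖⁻¹ • (A₁ - A₀), n⟫) • n)
    (p q r : ℝ) (hpq : (p, q) ≠ (0, 0))
    (hline0 : p * A₀ 0 + q * A₀ 1 = r) (hline1 : p * A₁ 0 + q * A₁ 1 = r)
    (lam : ℝ) (hlam₁ : lam ≠ -a₁ ^ 2) (hlam₂ : lam ≠ -a₂ ^ 2)
    (htan : (a₁ ^ 2 + lam) * p ^ 2 + (a₂ ^ 2 + lam) * q ^ 2 = r ^ 2) :
    ∀ p' q' r' : ℝ, (p', q') ≠ (0, 0) →
      p' * A₁ 0 + q' * A₁ 1 = r' → p' * A₂ 0 + q' * A₂ 1 = r' →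
      (a₁ ^ 2 + lam) * p' ^ 2 + (a₂ ^ 2 + lam) * q' ^ 2 = r' ^ 2 := by
  intro p' q' r' hpq' hline1' hline2'
  obtain ⟨k, hkpos, hk0, hk1⟩ := hnprop
  have ha₁0 : a₁ ≠ 0 := ne_of_gt (lt_trans ha₂ ha)
  have ha₂0 : a₂ ≠ 0 := ne_of_gt ha₂
  have hu : A₁ - A₀ ≠ 0 := sub_ne_zero.mpr h01.symm
  have hw : A₂ - A₁ ≠ 0 := sub_ne_zero.mpr h12.symm
  have hNu : ‖A₁ - A₀‖ ≠ 0 := norm_ne_zero_iff.mpr hu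
  have hNw : ‖A₂ - A₁‖ ≠ 0 := norm_ne_zero_iff.mpr hw
  -- unit normal in coordinates
  have hn2 : n 0 ^ 2 + n 1 ^ 2 = 1 := by
    have h' : ⟪n, n⟫ = ‖n‖ * ‖n‖ := real_inner_self_eq_norm_mul_norm n
    rw [hn] at h'
    simp only [PiLp.inner_apply, RCLike.inner_apply, Fin.sum_univ_two, conj_trivial] at h'
    linear_combination h'
  -- reflection in coordinates
  have h0 := congrArg (fun v => v 0) hrefl
  have h1 := congrArg (fun v => v 1) hrefl
  simp only [PiLp.smul_apply, PiLp.sub_apply, smul_eq_mul, PiLp.inner_apply,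
    RCLike.inner_apply, Fin.sum_univ_two, conj_trivial] at h0 h1
  have e0 : ‖A₂ - A₁‖⁻¹ * (A₂ 0 - A₁ 0)
      = ‖A₁ - A₀‖⁻¹ * ((A₁ 0 - A₀ 0)
          - 2 * ((A₁ 0 - A₀ 0) * n 0 + (A₁ 1 - A₀ 1) * n 1) * n 0) := by
    linear_combination h0
  have e1 : ‖A₂ - A₁‖⁻¹ * (A₂ 1 - A₁ 1)
      = ‖A₁ - A₀‖⁻¹ * ((A₁ 1 - A₀ 1)
          - 2 * ((A₁ 0 - A₀ 0) * n 0 + (A₁ 1 - A₀ 1) * n 1) * n 1) := by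
    linear_combination h1
  have hw₀ : A₂ 0 - A₁ 0 = ‖A₂ - A₁‖ * (‖A₁ - A₀‖⁻¹ * ((A₁ 0 - A₀ 0)
      - 2 * ((A₁ 0 - A₀ 0) * n 0 + (A₁ 1 - A₀ 1) * n 1) * n 0)) := by
    rw [← e0, ← mul_assoc, mul_inv_cancel₀ hNw, one_mul]
  have hw₁ : A₂ 1 - A₁ 1 = ‖A₂ - A₁‖ * (‖A₁ - A₀‖⁻¹ * ((A₁ 1 - A₀ 1)
      - 2 * ((A₁ 0 - A₀ 0) * n 0 + (A₁ 1 - A₀ 1) * n 1) * n 1)) := by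
    rw [← e1, ← mul_assoc, mul_inv_cancel₀ hNw, one_mul]
  -- tangency condition for the incoming chord
  have hne01 : ¬(A₀ 0 = A₁ 0 ∧ A₀ 1 = A₁ 1) := by
    rintro ⟨g0, g1⟩
    apply h01
    ext i
    fin_cases i
    · exact g0
    · exact g1
  have hpq2 : ¬(p = 0 ∧ q = 0) := by
    rintro ⟨g0, g1⟩
    exact hpq (by rw [g0, g1])
  obtain ⟨s, hs, hp, hq, hr⟩ :=
    line_param (A₁ 0) (A₁ 1) (A₀ 0) (A₀ 1) p q r hne01 hpq2 hline1 hline0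
  subst hp hq hr
  have hT : (a₂ ^ 2 + lam) * (A₁ 0 - A₀ 0) ^ 2 + (a₁ ^ 2 + lam) * (A₁ 1 - A₀ 1) ^ 2
      = ((A₁ 1 - A₀ 1) * A₁ 0 - (A₁ 0 - A₀ 0) * A₁ 1) ^ 2 := by
    apply mul_left_cancel₀ (pow_ne_zero 2 hs)
    linear_combination htan
  -- tangency condition for the outgoing chord, via reflection invariance
  have key := key_refl a₁ a₂ lam (A₁ 0) (A₁ 1) (n 0) (n 1) k
    (A₁ 0 - A₀ 0) (A₁ 1 - A₀ 1) ha₁0 ha₂0 hA₁ hn2 hk0 hk1 hT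
  have hTw : (a₂ ^ 2 + lam) * (A₂ 0 - A₁ 0) ^ 2 + (a₁ ^ 2 + lam) * (A₂ 1 - A₁ 1) ^ 2
      = ((A₂ 1 - A₁ 1) * A₁ 0 - (A₂ 0 - A₁ 0) * A₁ 1) ^ 2 := by
    rw [hw₀, hw₁]
    linear_combination (‖A₂ - A₁‖ * ‖A₁ - A₀‖⁻¹) ^ 2 * key
  -- conclude for the given line through A₁ and A₂
  have hne12 : ¬(A₂ 0 = A₁ 0 ∧ A₂ 1 = A₁ 1) := by
    rintro ⟨g0, g1⟩
    apply h12
    ext i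
    fin_cases i
    · exact g0.symm
    · exact g1.symm
  have hpq2' : ¬(p' = 0 ∧ q' = 0) := by
    rintro ⟨g0, g1⟩
    exact hpq' (by rw [g0, g1])
  obtain ⟨s', hs', hp', hq', hr'⟩ :=
    line_param (A₁ 0) (A₁ 1) (A₂ 0) (A₂ 1) p' q' r' hne12 hpq2' hline1' hline2'
  subst hp' hq' hr'
  linear_combination s' ^ 2 * hTw
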